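/- arXiv:2501.12997 — 6 statements merged into one kernel-verified Lean document; each statement's English description precedes it below -/
import Mathlib

section
/- Let h ≥ 1 be fixed. For all sufficiently large m, the following holds: let B be a finite set of size m and let γ, τ₁, …, τ_h be bijections from {1,…,m} to B such that each τ_s is 'close' to γ, meaning γ⁻¹(τ_s(j)) ≤ j + √m for every j ∈ {1,…,m}. Then there exists r with 1 ≤ r ≤ m/2 + √m such that the element γ(r) has position at most m/2 in every permutation τ₁, …, τ_h, i.e., τ_s⁻¹(γ(r)) ≤ m/2 for all s = 1,…,h. -/
open Finset


/-- For any fixed h ≥ 1 and all sufficiently large m: if B is a set of size m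
(identified via bijections from `Fin m`, positions being 1-based), γ, τ₁, …, τ_h
are permutations of B, and each τ_s is close to γ (i.e. the position in γ of the
j-th element of τ_s is at most j + √m), then some element γ(r) with
r ≤ m/2 + √m has position at most m/2 in every τ_s. -/
theorem close_permutations_common_early_element (h : ℕ) (hh : 1 ≤ h) :
    ∃ M : ℕ, ∀ m : ℕ, M ≤ m → ∀ (B : Type) (γ : Fin m ≃ B) (τ : Fin h → (Fin m ≃ B)),
      (∀ (s : Fin h) (j : Fin m),
        ((γ.symm ((τ s) j) : ℕ) + 1 : ℝ) ≤ ((j : ℕ) + 1) + Real.sqrt m) →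
      ∃ r : Fin m, ((r : ℕ) + 1 : ℝ) ≤ (m : ℝ) / 2 + Real.sqrt m ∧
        ∀ s : Fin h, (((τ s).symm (γ r) : ℕ) + 1 : ℝ) ≤ (m : ℝ) / 2 := by
  classical
  refine ⟨100 * h ^ 2, ?_⟩
  intro m hm B γ τ hclose
  have hm100 : 100 ≤ m := le_trans (by nlinarith) hm
  have hq10 : 10 * h ≤ Nat.sqrt m := by
    have h1 : Nat.sqrt (100 * h ^ 2) ≤ Nat.sqrt m := Nat.sqrt_le_sqrt hm
    have h2 : Nat.sqrt (100 * h ^ 2) = 10 * h := by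
      rw [show 100 * h ^ 2 = (10 * h) ^ 2 by ring, Nat.sqrt_eq']
    omega
  set q := Nat.sqrt m with hqdef
  -- conversion lemma between real and nat halves
  have key : ∀ k : ℕ, ((k : ℝ) ≤ (m : ℝ) / 2) ↔ k ≤ m / 2 := by
    intro k
    rw [le_div_iff₀ (by norm_num : (0:ℝ) < 2),
      show ((k:ℝ) * 2 = ((k * 2 : ℕ) : ℝ)) by push_cast; ring, Nat.cast_le]
    omega
  have hsqrt_nonneg : (0:ℝ) ≤ Real.sqrt m := Real.sqrt_nonneg _
  have hsq_lt : Real.sqrt m < (q : ℝ) + 1 := by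
    rw [show ((q:ℝ) + 1) = ((q + 1 : ℕ) : ℝ) by push_cast; ring,
      Real.sqrt_lt' (by positivity)]
    exact_mod_cast Nat.lt_succ_sqrt' m
  have hhalf_lt : (m : ℝ) / 2 < ((m / 2 : ℕ) : ℝ) + 1 := by
    rw [div_lt_iff₀ (by norm_num : (0:ℝ) < 2),
      show (((m/2 : ℕ) : ℝ) + 1) * 2 = (((m/2) * 2 + 2 : ℕ) : ℝ) by push_cast; ring,
      Nat.cast_lt]
    omega
  set T : Finset (Fin m) :=
    univ.filter (fun r => ((r : ℕ) + 1 : ℝ) ≤ (m : ℝ) / 2 + Real.sqrt m) with hTdef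
  set P : Finset (Fin m) :=
    univ.filter (fun j => ((j : ℕ) + 1 : ℝ) ≤ (m : ℝ) / 2) with hPdef
  set G : Fin h → Finset (Fin m) :=
    (fun s => univ.filter (fun r => (((τ s).symm (γ r) : ℕ) + 1 : ℝ) ≤ (m : ℝ) / 2))
    with hGdef
  -- lower bound on P
  have hk : m / 2 ≤ m := Nat.div_le_self _ _
  have hP : m / 2 ≤ P.card := by
    have himg : (univ.image (Fin.castLE hk)) ⊆ P := by
      intro r hr
      simp only [mem_image, mem_univ, true_and] at hr
      obtain ⟨i, rfl⟩ := hr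
      simp only [hPdef, mem_filter, mem_univ, true_and, Fin.coe_castLE]
      rw [show ((i:ℕ) + 1 : ℝ) = (((i:ℕ) + 1 : ℕ) : ℝ) by push_cast; ring, key]
      omega
    calc m / 2 = (univ : Finset (Fin (m/2))).card := by simp
      _ = (univ.image (Fin.castLE hk)).card :=
          (card_image_of_injective _ (Fin.castLE_injective hk)).symm
      _ ≤ P.card := card_le_card himg
  -- P ⊆ T
  have hPT : P ⊆ T := by
    intro r hr
    simp only [hPdef, hTdef, mem_filter, mem_univ, true_and] at hr ⊢
    linarith
  -- upper bound on T
  have hT : T.card ≤ m / 2 + q + 1 := by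
    have hsub : ∀ r ∈ T, (r : ℕ) ∈ Finset.range (m / 2 + q + 1) := by
      intro r hr
      simp only [hTdef, mem_filter, mem_univ, true_and] at hr
      simp only [mem_range]
      have : ((r : ℕ) + 1 : ℝ) < (((m/2) + q + 2 : ℕ) : ℝ) := by
        push_cast
        linarith
      have h2 : (r : ℕ) + 1 < m / 2 + q + 2 := by exact_mod_cast this
      omega
    have := card_le_card_of_injOn (fun r : Fin m => (r : ℕ)) hsub
      (fun a _ b _ hab => Fin.val_injective hab)
    simpa using this
  -- for each s, T ∩ G s is large
  have hTG : ∀ s, m / 2 ≤ (T ∩ G s).card := by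
    intro s
    have hinj : Function.Injective (fun j : Fin m => γ.symm ((τ s) j)) := by
      intro a b hab
      simpa using congrArg (fun x => (τ s).symm (γ x)) hab
    have himg : P.image (fun j : Fin m => γ.symm ((τ s) j)) ⊆ T ∩ G s := by
      intro r hr
      simp only [mem_image] at hr
      obtain ⟨j, hj, rfl⟩ := hr
      simp only [hPdef, mem_filter, mem_univ, true_and] at hj
      simp only [hTdef, hGdef, mem_inter, mem_filter, mem_univ, true_and]
      refine ⟨(hclose s j).trans (by linarith), ?_⟩
      simpa using hj
    calc m / 2 ≤ P.card := hP
      _ = (P.image (fun j : Fin m => γ.symm ((τ s) j))).card :=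
          (card_image_of_injective _ hinj).symm
      _ ≤ (T ∩ G s).card := card_le_card himg
  -- bad sets are small
  have hbad : ∀ s, (T \ G s).card ≤ q + 1 := by
    intro s
    have h1 : T \ G s = T \ (T ∩ G s) := (sdiff_inter_self_left T (G s)).symm
    rw [h1, card_sdiff_of_subset inter_subset_left]
    have := hTG s
    omega
  set U : Finset (Fin m) := univ.biUnion (fun s : Fin h => T \ G s) with hUdef
  have hU : U.card ≤ h * (q + 1) := by
    calc U.card ≤ ∑ s : Fin h, (T \ G s).card := card_biUnion_le
      _ ≤ ∑ _s : Fin h, (q + 1) := sum_le_sum (fun s _ => hbad s)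
      _ = h * (q + 1) := by simp [mul_comm]
  -- arithmetic: h * (q + 1) < m / 2
  have harith : h * (q + 1) < m / 2 := by
    have h1 : q ^ 2 ≤ m := Nat.sqrt_le' m
    have h2 : 10 * (h * q) ≤ m := by nlinarith
    have h3 : h * q ≥ h := Nat.le_mul_of_pos_right h (by omega)
    have h4 : h * (q + 1) = h * q + h := by ring
    omega
  have hlt : U.card < T.card :=
    lt_of_le_of_lt hU (lt_of_lt_of_le harith (le_trans hP (card_le_card hPT)))
  have hns : ¬ T ⊆ U := fun hsub => absurd (card_le_card hsub) (not_le.2 hlt)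
  obtain ⟨r, hrT, hrU⟩ := not_subset.mp hns
  simp only [hTdef, mem_filter, mem_univ, true_and] at hrT
  refine ⟨r, hrT, ?_⟩
  intro s
  have : r ∈ G s := by
    by_contra hng
    exact hrU (mem_biUnion.mpr ⟨s, mem_univ s, mem_sdiff.mpr
      ⟨by simp only [hTdef, mem_filter, mem_univ, true_and]; exact hrT, hng⟩⟩)
  simpa only [hGdef, mem_filter, mem_univ, true_and] using this
end

section
/- For any positive integers t and n with n > 2t, there is no decision tree over assignment queries of depth t−1 computing the t-fold iterated composition function Comp^t_n on [n]^n, where Comp^t_n(f(1),…,f(n)) = f^(t)(1). Equivalently, rk(Comp^t_n) ≥ t. -/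
/-- Decision trees over assignment queries: each internal node is labeled by a
linear ordering of the set `A` of assignments (represented by an injection
`A ↪ ℕ` giving each assignment its position in the ordering), with one child per
possible answer; leaves are labeled by outputs. -/
inductive DTree (A O : Type) where
  | leaf (o : O)
  | node (τ : A ↪ ℕ) (child : A → DTree A O)

/-- The τ-first element of the set `C` of assignments consistent with the input. -/
noncomputable def firstConsistent {A : Type} [Nonempty A] (τ : A ↪ ℕ) (C : Finset A) : A :=
  Function.invFun τ ((C.image τ).min.getD 0)

/-- Depth of a decision tree: maximal number of queries on a root-to-leaf path. -/
def DTree.depth {A O : Type} [Fintype A] : DTree A O → ℕ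
  | .leaf _ => 0
  | .node _ c => (Finset.univ.sup fun a => (c a).depth) + 1

/-- Evaluation of a decision tree on an input `w`, where `consSet w` is the set of
assignments consistent with `w`: at each node descend along the child labeled by
the first consistent assignment in the node's ordering. -/
noncomputable def DTree.eval {I A O : Type} [Nonempty A] (consSet : I → Finset A) :
    DTree A O → I → O
  | .leaf o, _ => o
  | .node τ c, w => (c (firstConsistent τ (consSet w))).eval consSet w

/-- Assignments are pairs (i,j) ∈ [n]×[n]; (i,j) is consistent with f iff f(i)=j. -/
def consSet (n : ℕ) (w : Fin n → Fin n) : Finset (Fin n × Fin n) :=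
  Finset.univ.filter fun a => w a.1 = a.2

/-- The t-fold iterated composition function: f ↦ f^(t)(1). -/
def iterComp (t n : ℕ) [NeZero n] (w : Fin n → Fin n) : Fin n := w^[t] 0

lemma firstConsistent_eq {A : Type} [Nonempty A] (τ : A ↪ ℕ) (C : Finset A) (a : A)
    (ha : a ∈ C) (hmin : ∀ b ∈ C, τ a ≤ τ b) : firstConsistent τ C = a := by
  have h1 : (C.image τ).min = (τ a : WithTop ℕ) := by
    apply le_antisymm
    · exact Finset.min_le (Finset.mem_image_of_mem τ ha)
    · apply Finset.le_min
      intro b hb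
      obtain ⟨c, hc, rfl⟩ := Finset.mem_image.mp hb
      exact WithTop.coe_le_coe.mpr (hmin c hc)
  unfold firstConsistent
  rw [h1]
  show Function.invFun τ (τ a) = a
  exact Function.leftInverse_invFun τ.injective a

lemma iter_eq_of_agree {α : Type*} (w ρ : α → α) (x : α) (D : α → Prop)
    (hagree : ∀ i, D i → w i = ρ i) (e : ℕ) (hin : ∀ j < e, D (ρ^[j] x)) :
    ∀ j ≤ e, w^[j] x = ρ^[j] x := by
  intro j hj
  induction j with
  | zero => rfl
  | succ k ihk =>
    rw [Function.iterate_succ_apply', Function.iterate_succ_apply',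
        ihk (Nat.le_of_succ_le hj), hagree _ (hin k (Nat.lt_of_succ_le hj))]
lemma adversary (t n : ℕ) (ht : 0 < t) (hn : 2 * t < n) [NeZero n]
    (T : DTree (Fin n × Fin n) (Fin n)) :
    ∀ (D : Finset (Fin n)) (ρ : Fin n → Fin n) (Bad : Finset (Fin n)) (e : ℕ),
      T.depth + D.card ≤ t - 1 →
      Bad.card ≤ 2 * D.card + 1 →
      D ⊆ Bad → (0 : Fin n) ∈ Bad →
      e ≤ D.card → (∀ j < e, ρ^[j] 0 ∈ D) → ρ^[e] 0 ∉ D → ρ^[e] 0 ∈ Bad →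
      ∃ w : Fin n → Fin n, (∀ i ∈ D, w i = ρ i) ∧ (∀ i ∉ D, w i ∉ Bad) ∧
        T.eval (consSet n) w ≠ iterComp t n w := by
  induction T with
  | leaf o =>
    intro D ρ Bad e h1 h2 h3 h4 he hin hout hbad
    have hD : D.card ≤ t - 1 := by simpa [DTree.depth] using h1
    have hcompl : 1 < Badᶜ.card := by
      rw [Finset.card_compl, Fintype.card_fin]; omega
    obtain ⟨z1, hz1, z2, hz2, hz12⟩ := Finset.one_lt_card.mp hcompl
    rw [Finset.mem_compl] at hz1 hz2
    obtain ⟨z, hz, hzo⟩ : ∃ z, z ∉ Bad ∧ z ≠ o := by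
      rcases eq_or_ne z1 o with rfl | h
      · exact ⟨z2, hz2, fun h => hz12 h.symm⟩
      · exact ⟨z1, hz1, h⟩
    set w : Fin n → Fin n := fun i => if i ∈ D then ρ i else z with hw
    have hagree : ∀ i ∈ D, w i = ρ i := fun i hi => if_pos hi
    have hfree : ∀ i ∉ D, w i ∉ Bad := fun i hi => by
      rw [hw]; simpa [hi] using hz
    have hiter := iter_eq_of_agree w ρ 0 (· ∈ D) hagree e hin
    have h5 : w^[e + 1] 0 = z := by
      rw [Function.iterate_succ_apply', hiter e le_rfl, hw]
      simp [hout]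
    have hzD : z ∉ D := fun h => hz (h3 h)
    have hfix : w z = z := if_neg hzD
    have hwt : w^[t] 0 = z := by
      have htt : t = (t - (e + 1)) + (e + 1) := by omega
      rw [htt, Function.iterate_add_apply, h5, Function.iterate_fixed hfix]
    refine ⟨w, hagree, hfree, ?_⟩
    show o ≠ iterComp t n w
    rw [iterComp, hwt]
    exact fun h => hzo h.symm
  | node τ c ih =>
    intro D ρ Bad e h1 h2 h3 h4 he hin hout hbad
    have hdepth : (Finset.univ.sup fun a => (c a).depth) + 1 + D.card ≤ t - 1 := by
      simpa [DTree.depth] using h1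
    obtain ⟨i0, hi0⟩ : ∃ i0 : Fin n, i0 ∉ D := by
      have : Dᶜ.Nonempty := by
        rw [← Finset.card_pos, Finset.card_compl, Fintype.card_fin]; omega
      obtain ⟨i, hi⟩ := this; exact ⟨i, Finset.mem_compl.mp hi⟩
    obtain ⟨j0, hj0⟩ : ∃ j0 : Fin n, j0 ∉ Bad := by
      have : Badᶜ.Nonempty := by
        rw [← Finset.card_pos, Finset.card_compl, Fintype.card_fin]; omega
      obtain ⟨j, hj⟩ := this; exact ⟨j, Finset.mem_compl.mp hj⟩
    set C : Finset (Fin n × Fin n) := Finset.univ.filter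
      (fun b => (b.1 ∈ D ∧ b.2 = ρ b.1) ∨ (b.1 ∉ D ∧ b.2 ∉ Bad)) with hC
    have hCne : C.Nonempty := ⟨(i0, j0), by simp [hC, hi0, hj0]⟩
    obtain ⟨a, haC, hamin⟩ := Finset.exists_min_image C τ hCne
    have haC' : (a.1 ∈ D ∧ a.2 = ρ a.1) ∨ (a.1 ∉ D ∧ a.2 ∉ Bad) :=
      (Finset.mem_filter.mp haC).2
    have hca : (c a).depth ≤ Finset.univ.sup fun a => (c a).depth :=
      Finset.le_sup (f := fun a => (c a).depth) (Finset.mem_univ a)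
    by_cases haD : a.1 ∈ D
    · -- already-known assignment: no new information
      have ha2 : a.2 = ρ a.1 := by
        rcases haC' with ⟨_, h⟩ | ⟨h, _⟩
        · exact h
        · exact absurd haD h
      obtain ⟨w, hw1, hw2, hw3⟩ := ih a D ρ Bad e (by omega) h2 h3 h4 he hin hout hbad
      have hfc : firstConsistent τ (consSet n w) = a := by
        apply firstConsistent_eq
        · simp only [consSet, Finset.mem_filter, Finset.mem_univ, true_and]
          rw [hw1 a.1 haD, ha2]
        · intro b hb
          apply hamin
          simp only [consSet, Finset.mem_filter, Finset.mem_univ, true_and] at hb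
          simp only [hC, Finset.mem_filter, Finset.mem_univ, true_and]
          by_cases hbD : b.1 ∈ D
          · exact Or.inl ⟨hbD, by rw [← hb, hw1 b.1 hbD]⟩
          · exact Or.inr ⟨hbD, hb ▸ hw2 b.1 hbD⟩
      refine ⟨w, hw1, hw2, ?_⟩
      show (c (firstConsistent τ (consSet n w))).eval (consSet n) w ≠ iterComp t n w
      rw [hfc]; exact hw3
    · -- new assignment a.1 ↦ a.2 with a.2 ∉ Bad
      have ha2 : a.2 ∉ Bad := by
        rcases haC' with ⟨h, _⟩ | ⟨_, h⟩
        · exact absurd h haD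
        · exact h
      set D' : Finset (Fin n) := insert a.1 D with hD'
      set ρ' : Fin n → Fin n := Function.update ρ a.1 a.2 with hρ'
      set Bad' : Finset (Fin n) := insert a.1 (insert a.2 Bad) with hBad'
      have hDcard : D'.card = D.card + 1 := Finset.card_insert_of_notMem haD
      have hBadcard : Bad'.card ≤ Bad.card + 2 := by
        calc Bad'.card ≤ (insert a.2 Bad).card + 1 := Finset.card_insert_le _ _
        _ ≤ Bad.card + 2 := by have := Finset.card_insert_le a.2 Bad; omega
      have hagree' : ∀ i ∈ D, ρ' i = ρ i := fun i hi =>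
        Function.update_of_ne (by rintro rfl; exact haD hi) _ _
      have hiter' := iter_eq_of_agree ρ' ρ 0 (· ∈ D) (fun i hi => hagree' i hi) e hin
      have hρe : ρ'^[e] 0 = ρ^[e] 0 := hiter' e le_rfl
      have hsub : Bad ⊆ Bad' := fun x hx =>
        Finset.mem_insert_of_mem (Finset.mem_insert_of_mem hx)
      have hDsub : D ⊆ D' := Finset.subset_insert _ _
      have h3' : D' ⊆ Bad' := by
        intro x hx
        rcases Finset.mem_insert.mp hx with rfl | hx
        · exact Finset.mem_insert_self _ _
        · exact hsub (h3 hx)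
      have ha2D : a.2 ∉ D := fun h => ha2 (h3 h)
      -- choose new exit parameters
      obtain ⟨e', he', hin', hout', hbad'⟩ :
          ∃ e', e' ≤ D'.card ∧ (∀ j < e', ρ'^[j] 0 ∈ D') ∧ ρ'^[e'] 0 ∉ D' ∧
            ρ'^[e'] 0 ∈ Bad' := by
        by_cases hya : ρ^[e] 0 = a.1
        · refine ⟨e + 1, by omega, ?_, ?_, ?_⟩
          · intro j hj
            rcases Nat.lt_succ_iff_lt_or_eq.mp hj with hj | rfl
            · exact hDsub ((hiter' j (le_of_lt hj)).symm ▸ hin j hj)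
            · rw [hρe, hya]; exact Finset.mem_insert_self _ _
          · rw [Function.iterate_succ_apply', hρe, hya, hρ', Function.update_self]
            intro h
            rcases Finset.mem_insert.mp h with h | h
            · exact ha2 (h ▸ hya ▸ hbad)
            · exact ha2D h
          · rw [Function.iterate_succ_apply', hρe, hya, hρ', Function.update_self]
            exact Finset.mem_insert_of_mem (Finset.mem_insert_self _ _)
        · refine ⟨e, by omega, ?_, ?_, ?_⟩
          · intro j hj
            exact hDsub ((hiter' j (le_of_lt hj)).symm ▸ hin j hj)
          · rw [hρe]
            intro h
            rcases Finset.mem_insert.mp h with h | h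
            · exact hya h
            · exact hout h
          · rw [hρe]; exact hsub hbad
      obtain ⟨w, hw1, hw2, hw3⟩ := ih a D' ρ' Bad' e' (by omega) (by omega) h3'
        (hsub h4) he' hin' hout' hbad'
      have hwa : w a.1 = a.2 := by
        rw [hw1 a.1 (Finset.mem_insert_self _ _), hρ', Function.update_self]
      have hw1' : ∀ i ∈ D, w i = ρ i := fun i hi =>
        (hw1 i (hDsub hi)).trans (hagree' i hi)
      have hw2' : ∀ i ∉ D, w i ∉ Bad := by
        intro i hi
        by_cases hia : i = a.1
        · rw [hia, hwa]; exact ha2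
        · have : i ∉ D' := by
            intro h; rcases Finset.mem_insert.mp h with h | h
            · exact hia h
            · exact hi h
          exact fun h => hw2 i this (hsub h)
      have hfc : firstConsistent τ (consSet n w) = a := by
        apply firstConsistent_eq
        · simp only [consSet, Finset.mem_filter, Finset.mem_univ, true_and]
          exact hwa
        · intro b hb
          simp only [consSet, Finset.mem_filter, Finset.mem_univ, true_and] at hb
          by_cases hba : b.1 = a.1
          · have : b = a := by
              have : b.2 = a.2 := by rw [← hb, hba, hwa]
              exact Prod.ext hba this
            rw [this]
          · apply hamin
            simp only [hC, Finset.mem_filter, Finset.mem_univ, true_and]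
            by_cases hbD : b.1 ∈ D
            · exact Or.inl ⟨hbD, by rw [← hb, hw1' b.1 hbD]⟩
            · refine Or.inr ⟨hbD, ?_⟩
              have hbD' : b.1 ∉ D' := by
                intro h; rcases Finset.mem_insert.mp h with h | h
                · exact hba h
                · exact hbD h
              exact fun h => hw2 b.1 hbD' (hsub (hb ▸ h))
      refine ⟨w, hw1', hw2', ?_⟩
      show (c (firstConsistent τ (consSet n w))).eval (consSet n) w ≠ iterComp t n w
      rw [hfc]; exact hw3

/-- For n > 2t there is no decision tree over assignment queries of depth t−1
computing `iterComp t n`; i.e. rk(Comp^t_n) ≥ t. -/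
theorem iterComp_rank_lower_bound (t n : ℕ) (ht : 0 < t) (hn : 2 * t < n) [NeZero n] :
    ¬ ∃ T : DTree (Fin n × Fin n) (Fin n),
        T.depth ≤ t - 1 ∧ ∀ w : Fin n → Fin n, T.eval (consSet n) w = iterComp t n w := by
  rintro ⟨T, hdep, hcomp⟩
  obtain ⟨w, -, -, hw⟩ := adversary t n ht hn T ∅ (fun _ => 0) {0} 0
    (by simpa using hdep) (by simp) (by simp) (by simp) (by simp)
    (fun j hj => absurd hj (Nat.not_lt_zero j)) (by simp) (by simp)
  exact hw (hcomp w)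
end

section
/- Let f : [n] → [n] be defined by f(i_s) = j_s for s = 1,…,k (with i_1,…,i_k distinct and j_1,…,j_k distinct), and f(x) = y for all x ∉ {i_1,…,i_k}, where y ∉ {1, i_1,…,i_k, j_1,…,j_k}. If k ≤ t − 1, then f^(t)(1) = y. -/
/-- Let f : [n] → [n] satisfy f(i_s) = j_s for s = 1,…,k (i's pairwise distinct,
j's pairwise distinct) and f(x) = y for all x outside {i_1,…,i_k}, where
y ∉ {1, i_1,…,i_k, j_1,…,j_k} and 1 ∉ {j_1,…,j_k}.  If k ≤ t−1 then f^(t)(1) = y.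
Here [n] is modeled by `Fin n` with the element "1" being `0 : Fin n`. -/
theorem iterate_reaches_fixed_point (n t k : ℕ) [NeZero n]
    (i j : Fin k → Fin n) (y : Fin n) (f : Fin n → Fin n)
    (hi : Function.Injective i) (hj : Function.Injective j)
    (hfij : ∀ s, f (i s) = j s)
    (hfy : ∀ x : Fin n, (∀ s, x ≠ i s) → f x = y)
    (hy1 : y ≠ 0) (hyi : ∀ s, y ≠ i s) (hyj : ∀ s, y ≠ j s)
    (h1j : ∀ s, j s ≠ 0)
    (hk : k + 1 ≤ t) :
    f^[t] 0 = y := by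
  have hfyy : f y = y := hfy y hyi
  have hiter_y : ∀ r, f^[r] y = y := by
    intro r; induction r with
    | zero => rfl
    | succ r ih => rw [Function.iterate_succ_apply', ih, hfyy]
  set x : ℕ → Fin n := fun m => f^[m] (0 : Fin n) with hx
  have key : ∃ m ≤ k, ∀ s, x m ≠ i s := by
    by_contra h
    push_neg at h
    choose s hs using h
    -- trajectory is injective on 0..k
    have inj : ∀ a, a ≤ k → ∀ b, b ≤ k → a < b → x a ≠ x b := by
      intro a
      induction a with
      | zero =>
        intro _ b hb hab heq
        obtain ⟨b', rfl⟩ := Nat.exists_eq_succ_of_ne_zero (by omega : b ≠ 0)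
        have hb' : b' ≤ k := Nat.le_of_succ_le hb
        have : x (b' + 1) = j (s b' hb') := by
          have h2 : x (b' + 1) = f (x b') := Function.iterate_succ_apply' f b' 0
          rw [h2, hs b' hb', hfij]
        rw [← heq] at this
        exact h1j _ this.symm
      | succ a ih =>
        intro ha b hb hab heq
        obtain ⟨b', rfl⟩ := Nat.exists_eq_succ_of_ne_zero (by omega : b ≠ 0)
        have ha' : a ≤ k := Nat.le_of_succ_le ha
        have hb' : b' ≤ k := Nat.le_of_succ_le hb
        have e1 : x (a + 1) = j (s a ha') := by
          have h2 : x (a + 1) = f (x a) := Function.iterate_succ_apply' f a 0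
          rw [h2, hs a ha', hfij]
        have e2 : x (b' + 1) = j (s b' hb') := by
          have h2 : x (b' + 1) = f (x b') := Function.iterate_succ_apply' f b' 0
          rw [h2, hs b' hb', hfij]
        have : s a ha' = s b' hb' := hj (by rw [← e1, ← e2, heq])
        have : x a = x b' := by rw [hs a ha', hs b' hb', this]
        exact ih ha' b' hb' (by omega) this
    -- pigeonhole on g : Fin (k+1) → Fin k
    have hcard : Fintype.card (Fin k) < Fintype.card (Fin (k + 1)) := by
      simp
    obtain ⟨a, b, hab, heq⟩ := Fintype.exists_ne_map_eq_of_card_lt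
      (fun m : Fin (k + 1) => s m.1 (Nat.lt_succ_iff.mp m.2)) hcard
    have hxab : x a.1 = x b.1 := by
      rw [hs a.1 (Nat.lt_succ_iff.mp a.2), hs b.1 (Nat.lt_succ_iff.mp b.2), heq]
    have hne : a.1 ≠ b.1 := fun h => hab (Fin.ext h)
    rcases Nat.lt_or_ge a.1 b.1 with hlt | hge
    · exact inj a.1 (Nat.lt_succ_iff.mp a.2) b.1 (Nat.lt_succ_iff.mp b.2) hlt hxab
    · exact inj b.1 (Nat.lt_succ_iff.mp b.2) a.1 (Nat.lt_succ_iff.mp a.2)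
        (by omega) hxab.symm
  obtain ⟨m, hm, hne⟩ := key
  have hstep : f^[m + 1] (0 : Fin n) = y := by
    rw [Function.iterate_succ_apply']
    exact hfy _ hne
  obtain ⟨r, rfl⟩ := Nat.exists_eq_add_of_le (by omega : m + 1 ≤ t)
  rw [Nat.add_comm, Function.iterate_add_apply, hstep, hiter_y]
end

section
/- For every k and every n ≥ k² + k, there is no decision tree over assignment queries of depth k−1 computing One^k_n; hence rk(One^k_n) = k for such n. -/
/-- One^k_n(w) : the (1-based) position of the k-th one in w ∈ {0,1}^n, or n+1
if w has fewer than k ones. -/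
def oneK (k n : ℕ) (w : Fin n → Bool) : ℕ :=
  (((Finset.range n).filter fun p =>
      (Finset.univ.filter fun j : Fin n => (j : ℕ) ≤ p ∧ w j = true).card = k).min.getD n) + 1

/-- Assignments are pairs (i,b) with i ∈ [n], b ∈ {0,1}; (i,b) is consistent
with w iff w_i = b. -/
def consSetB (n : ℕ) (w : Fin n → Bool) : Finset (Fin n × Bool) :=
  Finset.univ.filter fun a => w a.1 = a.2


/-- `w` extends the partial assignment `Q`. -/
def ExtendsPA {n : ℕ} (Q : Finset (Fin n × Bool)) (w : Fin n → Bool) : Prop :=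
  ∀ a ∈ Q, w a.1 = a.2

/-- `Q` contains no contradictory pair. -/
def FuncPA {n : ℕ} (Q : Finset (Fin n × Bool)) : Prop :=
  ∀ a ∈ Q, (a.1, !a.2) ∉ Q

lemma adversary_s9 {n : ℕ} [NeZero n] (T : DTree (Fin n × Bool) ℕ) :
    ∀ P : Finset (Fin n × Bool), FuncPA P →
    ∃ Q : Finset (Fin n × Bool), P ⊆ Q ∧ FuncPA Q ∧ Q.card ≤ P.card + T.depth ∧
      ∃ o : ℕ, ∀ w, ExtendsPA Q w → T.eval (consSetB n) w = o := by
  induction T with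
  | leaf o =>
    intro P hP
    exact ⟨P, Finset.Subset.refl _, hP, by simp [DTree.depth], o, fun w _ => rfl⟩
  | node τ c ih =>
    intro P hP
    set Comp : Finset (Fin n × Bool) := Finset.univ.filter fun a => (a.1, !a.2) ∉ P with hComp
    have hCompne : Comp.Nonempty := by
      have i : Fin n := ⟨0, Nat.pos_of_ne_zero (NeZero.ne n)⟩
      refine ⟨(i, decide ((i, true) ∈ P)), ?_⟩
      simp only [hComp, Finset.mem_filter, Finset.mem_univ, true_and]
      by_cases h : (i, true) ∈ P
      · simpa [h] using hP _ h
      · simpa [h] using h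
    obtain ⟨a₀, ha₀, hmin⟩ := Comp.exists_min_image τ hCompne
    have ha₀' : (a₀.1, !a₀.2) ∉ P := (Finset.mem_filter.mp ha₀).2
    have hfuncins : FuncPA (insert a₀ P) := by
      intro a ha hcontra
      rcases Finset.mem_insert.mp ha with rfl | haP
      · rcases Finset.mem_insert.mp hcontra with h | h
        · have := congrArg Prod.snd h; simp at this
        · exact ha₀' h
      · rcases Finset.mem_insert.mp hcontra with h | h
        · apply ha₀'
          rw [← h]; simpa using haP
        · exact hP a haP h
    obtain ⟨Q, hsub, hQfunc, hQcard, o, ho⟩ := ih a₀ (insert a₀ P) hfuncins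
    refine ⟨Q, (Finset.subset_insert a₀ P).trans hsub, hQfunc, ?_, o, ?_⟩
    · calc Q.card ≤ (insert a₀ P).card + (c a₀).depth := hQcard
        _ ≤ P.card + 1 + (c a₀).depth := by
            exact Nat.add_le_add_right (Finset.card_insert_le _ _) _
        _ ≤ P.card + ((Finset.univ.sup fun a => (c a).depth) + 1) := by
            have h5 : (c a₀).depth ≤ Finset.univ.sup fun a => (c a).depth := by
              simpa using Finset.le_sup (f := fun a => (c a).depth) (Finset.mem_univ a₀)
            omega
        _ = P.card + (DTree.node τ c).depth := rfl
    · intro w hw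
      have hwins : ExtendsPA (insert a₀ P) w := fun a ha => hw a (hsub ha)
      have hfc : firstConsistent τ (consSetB n w) = a₀ := by
        apply firstConsistent_eq
        · simp only [consSetB, Finset.mem_filter, Finset.mem_univ, true_and]
          exact hwins a₀ (Finset.mem_insert_self _ _)
        · intro b hb
          apply hmin
          simp only [consSetB, Finset.mem_filter, Finset.mem_univ, true_and] at hb
          simp only [hComp, Finset.mem_filter, Finset.mem_univ, true_and]
          intro hbP
          have := hwins _ (Finset.mem_insert_of_mem hbP)
          simp only at this
          rw [hb] at this
          simp at this
      show (c (firstConsistent τ (consSetB n w))).eval (consSetB n) w = o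
      rw [hfc]
      exact ho w hw

lemma oneK_of_lt {k n : ℕ} (w : Fin n → Bool)
    (h : (Finset.univ.filter fun j : Fin n => w j = true).card < k) :
    oneK k n w = n + 1 := by
  have hempty : ((Finset.range n).filter fun p =>
      (Finset.univ.filter fun j : Fin n => (j : ℕ) ≤ p ∧ w j = true).card = k) = ∅ := by
    rw [Finset.filter_eq_empty_iff]
    intro p _ hcard
    have hsub : (Finset.univ.filter fun j : Fin n => (j : ℕ) ≤ p ∧ w j = true) ⊆
        (Finset.univ.filter fun j : Fin n => w j = true) := by
      intro j hj
      simp only [Finset.mem_filter] at hj ⊢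
      tauto
    have := Finset.card_le_card hsub
    omega
  rw [oneK, hempty]
  rfl

lemma oneK_of_eq {k n : ℕ} [NeZero n] (w : Fin n → Bool)
    (h : (Finset.univ.filter fun j : Fin n => w j = true).card = k) :
    oneK k n w ≤ n := by
  have hn : 1 ≤ n := Nat.pos_of_ne_zero (NeZero.ne n)
  set S := (Finset.range n).filter fun p =>
      (Finset.univ.filter fun j : Fin n => (j : ℕ) ≤ p ∧ w j = true).card = k with hS
  have hmem : n - 1 ∈ S := by
    rw [hS, Finset.mem_filter]
    refine ⟨Finset.mem_range.mpr (by omega), ?_⟩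
    rw [← h]
    congr 1
    apply Finset.filter_congr
    intro j _
    have : (j : ℕ) ≤ n - 1 := by omega
    simp [this]
  have hne : S.Nonempty := ⟨_, hmem⟩
  have h1 : S.min' hne ≤ n - 1 := Finset.min'_le _ _ hmem
  have h2 : S.min.getD n = S.min' hne := by rw [← Finset.coe_min' hne]; rfl
  rw [oneK, ← hS, h2]
  omega

/-- For k ≥ 1 and n ≥ k² + k, no decision tree over assignment queries of depth
k−1 computes One^k_n; hence rk(One^k_n) = k for such n. -/
theorem oneK_rank_lower_bound (k n : ℕ) (hk : 1 ≤ k) (hn : k ^ 2 + k ≤ n) [NeZero n] :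
    ¬ ∃ T : DTree (Fin n × Bool) ℕ,
        T.depth ≤ k - 1 ∧ ∀ w : Fin n → Bool, T.eval (consSetB n) w = oneK k n w := by
  rintro ⟨T, hdepth, hcomp⟩
  obtain ⟨Q, -, hQfunc, hQcard, o, ho⟩ := adversary_s9 T ∅ (by intro a ha; simp at ha)
  simp only [Finset.card_empty, Nat.zero_add] at hQcard
  have hQk : Q.card ≤ k - 1 := hQcard.trans hdepth
  -- positions fixed to true by Q
  set T1 : Finset (Fin n) := Finset.univ.filter fun i => (i, true) ∈ Q with hT1
  -- fixed positions
  set D : Finset (Fin n) := Finset.univ.filter fun i => (i, true) ∈ Q ∨ (i, false) ∈ Q with hD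
  have hDcard : D.card ≤ Q.card := by
    apply Finset.card_le_card_of_injOn (fun i => (i, decide ((i, true) ∈ Q)))
    · intro i hi
      rw [hD, Finset.mem_coe, Finset.mem_filter] at hi
      by_cases h : (i, true) ∈ Q
      · simpa [h] using h
      · simp only [h, decide_false, Finset.mem_coe]
        tauto
    · intro i _ j _ hij
      exact congrArg Prod.fst hij
  have hT1D : T1 ⊆ D := by
    intro i hi
    rw [hT1, Finset.mem_filter] at hi
    rw [hD, Finset.mem_filter]
    tauto
  have hT1card : T1.card ≤ k - 1 := (Finset.card_le_card hT1D).trans (hDcard.trans hQk)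
  -- free positions
  set Free : Finset (Fin n) := Finset.univ \ D with hFree
  have hFreecard : k - T1.card ≤ Free.card := by
    have hDk : D.card ≤ k - 1 := hDcard.trans hQk
    have hc : Free.card = n - D.card := by
      rw [hFree, Finset.card_sdiff_of_subset (Finset.subset_univ D)]
      simp
    have h2 : 2*k ≤ n := by nlinarith
    omega
  obtain ⟨F, hFsub, hFcard⟩ := Free.exists_subset_card_eq hFreecard
  -- the two inputs
  set w1 : Fin n → Bool := fun i => decide ((i, true) ∈ Q) with hw1
  set w2 : Fin n → Bool := fun i => decide ((i, true) ∈ Q ∨ i ∈ F) with hw2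
  have hext1 : ExtendsPA Q w1 := by
    intro a ha
    rw [hw1]
    rcases a with ⟨i, b⟩
    cases b
    · simp only
      have : (i, true) ∉ Q := by
        have := hQfunc (i, false) ha
        simp_all
      simp [this]
    · simp [ha]
  have hFnotQ : ∀ i ∈ F, (i, true) ∉ Q ∧ (i, false) ∉ Q := by
    intro i hi
    have := hFsub hi
    rw [hFree, Finset.mem_sdiff, hD, Finset.mem_filter] at this
    tauto
  have hext2 : ExtendsPA Q w2 := by
    intro a ha
    rw [hw2]
    rcases a with ⟨i, b⟩
    cases b
    · simp only
      have h1 : (i, true) ∉ Q := by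
        have := hQfunc (i, false) ha
        simp_all
      have h2 : i ∉ F := fun hF => (hFnotQ i hF).2 ha
      simp [h1, h2]
    · simp [ha]
  have hones1 : (Finset.univ.filter fun j : Fin n => w1 j = true) = T1 := by
    apply Finset.filter_congr
    intro j _
    simp [hw1, hT1]
  have hones2 : (Finset.univ.filter fun j : Fin n => w2 j = true).card = k := by
    have heq : (Finset.univ.filter fun j : Fin n => w2 j = true) = T1 ∪ F := by
      ext j
      simp [hw2, hT1]
    rw [heq, Finset.card_union_of_disjoint, hFcard]
    · omega
    · rw [Finset.disjoint_left]
      intro i hi hF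
      rw [hT1, Finset.mem_filter] at hi
      exact (hFnotQ i hF).1 hi.2
  have e1 : oneK k n w1 = n + 1 := by
    apply oneK_of_lt
    rw [hones1]
    omega
  have e2 : oneK k n w2 ≤ n := oneK_of_eq w2 hones2
  have ha1 := (ho w1 hext1).symm.trans (hcomp w1)
  have ha2 := (ho w2 hext2).symm.trans (hcomp w2)
  omega
end

section
/- Let m positions i_1,…,i_m ∈ [n] with m ≤ k−1 be fixed to Boolean values σ_1,…,σ_m, and suppose n ≥ k² + k. Then there exist two inputs w, w' ∈ {0,1}^n, both satisfying w_{i_j} = w'_{i_j} = σ_j for all j, such that One^k_n(w) ≠ One^k_n(w'). -/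
private lemma cnt_step (n : ℕ) (w : Fin n → Bool) (p : ℕ) :
    (Finset.univ.filter fun j : Fin n => (j : ℕ) ≤ p + 1 ∧ w j = true).card ≤
    (Finset.univ.filter fun j : Fin n => (j : ℕ) ≤ p ∧ w j = true).card + 1 := by
  classical
  have hsub : (Finset.univ.filter fun j : Fin n => (j : ℕ) ≤ p + 1 ∧ w j = true) ⊆
      (Finset.univ.filter fun j : Fin n => (j : ℕ) ≤ p ∧ w j = true) ∪
      (Finset.univ.filter fun j : Fin n => (j : ℕ) = p + 1) := by
    intro j hj
    simp only [Finset.mem_filter, Finset.mem_union, Finset.mem_univ, true_and] at *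
    obtain ⟨h1, h2⟩ := hj
    rcases Nat.lt_or_ge (j : ℕ) (p + 1) with h | h
    · exact Or.inl ⟨by omega, h2⟩
    · exact Or.inr (by omega)
  have hone : (Finset.univ.filter fun j : Fin n => (j : ℕ) = p + 1).card ≤ 1 := by
    apply Finset.card_le_one.2
    intro a ha b hb
    simp only [Finset.mem_filter, Finset.mem_univ, true_and] at ha hb
    exact Fin.ext (ha.trans hb.symm)
  calc _ ≤ _ := Finset.card_le_card hsub
    _ ≤ _ + _ := Finset.card_union_le _ _
    _ ≤ _ := by omega

/-- If m ≤ k−1 distinct positions are fixed to Boolean values and n ≥ k² + k,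
then there are two inputs agreeing with the fixation on which One^k_n differs. -/
theorem oneK_not_determined_by_fixation (n k m : ℕ) (hm : m + 1 ≤ k) (hn : k ^ 2 + k ≤ n)
    (i : Fin m → Fin n) (hi : Function.Injective i) (σ : Fin m → Bool) :
    ∃ w w' : Fin n → Bool,
      (∀ j, w (i j) = σ j) ∧ (∀ j, w' (i j) = σ j) ∧ oneK k n w ≠ oneK k n w' := by
  classical
  have hk : 1 ≤ k := by omega
  have hkn : k + m < n := by nlinarith
  set w : Fin n → Bool := fun j => if h : ∃ a, i a = j then σ h.choose else true with hw
  set w' : Fin n → Bool := fun j => if h : ∃ a, i a = j then σ h.choose else false with hw'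
  have hwagree : ∀ j, w (i j) = σ j := by
    intro j
    have h : ∃ a, i a = i j := ⟨j, rfl⟩
    simp only [hw, dif_pos h]
    exact congrArg σ (hi h.choose_spec)
  have hw'agree : ∀ j, w' (i j) = σ j := by
    intro j
    have h : ∃ a, i a = i j := ⟨j, rfl⟩
    simp only [hw', dif_pos h]
    exact congrArg σ (hi h.choose_spec)
  refine ⟨w, w', hwagree, hw'agree, ?_⟩
  set S : Finset (Fin n) := Finset.univ.image i with hS
  have hScard : S.card ≤ m := Finset.card_image_le.trans (by simp)
  -- oneK for w' is n + 1 : the filter set is empty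
  have hw'empty : ((Finset.range n).filter fun p =>
      (Finset.univ.filter fun j : Fin n => (j : ℕ) ≤ p ∧ w' j = true).card = k) = ∅ := by
    apply Finset.filter_false_of_mem
    intro p _
    have hsub : (Finset.univ.filter fun j : Fin n => (j : ℕ) ≤ p ∧ w' j = true) ⊆ S := by
      intro j hj
      simp only [Finset.mem_filter, Finset.mem_univ, true_and] at hj
      by_contra hjS
      have : ¬ ∃ a, i a = j := by
        rintro ⟨a, rfl⟩
        exact hjS (Finset.mem_image_of_mem i (Finset.mem_univ a))
      simp only [hw', dif_neg this] at hj
      exact absurd hj.2 (by simp)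
    have := (Finset.card_le_card hsub).trans hScard
    omega
  have hone' : oneK k n w' = n + 1 := by
    rw [oneK, hw'empty]
    rfl
  -- oneK for w is at most n
  set f : ℕ → ℕ := fun p =>
    (Finset.univ.filter fun j : Fin n => (j : ℕ) ≤ p ∧ w j = true).card with hf
  have hf0 : f 0 ≤ 1 := by
    apply Finset.card_le_one.2
    intro a ha b hb
    simp only [Finset.mem_filter, Finset.mem_univ, true_and, Nat.le_zero] at ha hb
    exact Fin.ext (ha.1.trans hb.1.symm)
  have hflast : k ≤ f (n - 1) := by
    have hsub : Sᶜ ⊆ (Finset.univ.filter fun j : Fin n => (j : ℕ) ≤ n - 1 ∧ w j = true) := by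
      intro j hj
      simp only [Finset.mem_compl] at hj
      have hna : ¬ ∃ a, i a = j := by
        rintro ⟨a, rfl⟩
        exact hj (Finset.mem_image_of_mem i (Finset.mem_univ a))
      simp only [Finset.mem_filter, Finset.mem_univ, true_and, hw, dif_neg hna]
      refine ⟨?_, by trivial⟩
      have := j.isLt
      omega
    have hcompl : n - m ≤ Sᶜ.card := by
      have := Finset.card_compl S
      simp only [Fintype.card_fin] at this
      omega
    show k ≤ (Finset.univ.filter fun j : Fin n => (j : ℕ) ≤ n - 1 ∧ w j = true).card
    have h1 := Finset.card_le_card hsub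
    omega
  -- find p with f p = k
  have hex : ∃ p, k ≤ f p := ⟨n - 1, hflast⟩
  obtain ⟨P, hP⟩ : ∃ P, P = Nat.find hex := ⟨_, rfl⟩
  have hPk : k ≤ f P := by rw [hP]; exact Nat.find_spec hex
  have hPle : P ≤ n - 1 := by rw [hP]; exact Nat.find_le hflast
  have hfPk : f P = k := by
    rcases Nat.eq_zero_or_pos P with h0 | hpos
    · rw [h0] at hPk ⊢; omega
    · obtain ⟨q, hq'⟩ := Nat.exists_eq_succ_of_ne_zero (Nat.pos_iff_ne_zero.mp hpos)
      have hq : ¬ k ≤ f q := by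
        apply Nat.find_min hex
        omega
      have hc := cnt_step n w q
      have hc2 : f (q + 1) ≤ f q + 1 := hc
      rw [hq'] at hPk ⊢
      simp only [Nat.succ_eq_add_one] at hPk ⊢
      omega
  have hPmem : P ∈ (Finset.range n).filter fun p =>
      (Finset.univ.filter fun j : Fin n => (j : ℕ) ≤ p ∧ w j = true).card = k := by
    simp only [Finset.mem_filter, Finset.mem_range]
    exact ⟨by omega, hfPk⟩
  have hne : ((Finset.range n).filter fun p =>
      (Finset.univ.filter fun j : Fin n => (j : ℕ) ≤ p ∧ w j = true).card = k).Nonempty :=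
    ⟨P, hPmem⟩
  have hmin := Finset.min'_mem _ hne
  have hmineq := Finset.coe_min' hne
  have hone : oneK k n w ≤ n := by
    rw [oneK, ← hmineq]
    simp only [Finset.mem_filter, Finset.mem_range] at hmin
    exact Nat.succ_le_of_lt hmin.1
  omega
end

section
/- Let S = S⁺ ∪ S⁻ where S⁺ = { e_i : i ∈ [n] } is the set of standard basis vectors of {0,1}^n (each with exactly one 1) and S⁻ = { 0ⁿ }. Then for any linear order on the 2n assignments separating S⁺ from S⁻ via the first-consistent-assignment query (i.e., the query value distinguishes every element of S⁺ from 0ⁿ), at most one 1-assignment (i,1) is smaller in the order than some 0-assignment; equivalently, for all but at most one index i, the assignment (i,1) is larger than every assignment (j,0). -/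
/-- The query value of x under the linear order τ on assignments (i,b):
the τ-maximal assignment consistent with x (where (i,b) is consistent with x iff
x_i = b). -/
noncomputable def maxCons (n : ℕ) [NeZero n] (τ : (Fin n × Bool) ↪ ℕ) (x : Fin n → Bool) :
    Fin n × Bool :=
  Function.invFun τ (((Finset.univ.filter fun a : Fin n × Bool => x a.1 = a.2).image τ).max.getD 0)

lemma maxCons_spec (n : ℕ) [NeZero n] (τ : (Fin n × Bool) ↪ ℕ) (x : Fin n → Bool) :
    x (maxCons n τ x).1 = (maxCons n τ x).2 ∧
      ∀ a : Fin n × Bool, x a.1 = a.2 → τ a ≤ τ (maxCons n τ x) := by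
  classical
  set s := Finset.univ.filter fun a : Fin n × Bool => x a.1 = a.2 with hs
  have hne : s.Nonempty := ⟨(⟨0, Nat.pos_of_ne_zero (NeZero.ne n)⟩, x ⟨0, Nat.pos_of_ne_zero (NeZero.ne n)⟩), by simp [hs]⟩
  have hne' : (s.image τ).Nonempty := hne.image τ
  have hmax : (s.image τ).max = some ((s.image τ).max' hne') := (Finset.coe_max' hne').symm
  have hmem : (s.image τ).max' hne' ∈ s.image τ := Finset.max'_mem _ _
  obtain ⟨a, ha, hτa⟩ := Finset.mem_image.mp hmem
  have hmc : maxCons n τ x = a := by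
    rw [maxCons, ← hs, hmax]
    simpa [← hτa] using Function.leftInverse_invFun τ.injective a
  rw [hmc]
  constructor
  · have := Finset.mem_filter.mp ha
    exact this.2
  · intro b hb
    have hbmem : τ b ∈ s.image τ := Finset.mem_image_of_mem τ (by simp [hs, hb])
    have := Finset.le_max' _ _ hbmem
    omega

/-- Let S⁺ consist of the n standard basis vectors e_i of {0,1}^n and S⁻ = {0ⁿ}.
If a linear order τ on the 2n assignments separates S⁺ from S⁻ (the query value
of each e_i differs from that of 0ⁿ), then all 1-assignments except possibly one
are larger in τ than every 0-assignment. -/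
theorem basis_vs_zero_separation (n : ℕ) (hn : 2 ≤ n) [NeZero n]
    (τ : (Fin n × Bool) ↪ ℕ)
    (hsep : ∀ i : Fin n,
      maxCons n τ (fun j => decide (j = i)) ≠ maxCons n τ (fun _ => false)) :
    ∃ i₀ : Fin n, ∀ i : Fin n, i ≠ i₀ → ∀ j : Fin n, τ (j, false) < τ (i, true) := by
  classical
  obtain ⟨hz1, hz2⟩ := maxCons_spec n τ (fun _ => false)
  set z := maxCons n τ (fun _ => false) with hz
  have hz2' : z.2 = false := hz1.symm
  refine ⟨z.1, fun i hi j => ?_⟩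
  obtain ⟨hw1, hw2⟩ := maxCons_spec n τ (fun j => decide (j = i))
  set w := maxCons n τ (fun j => decide (j = i)) with hw
  -- z is consistent with e_i since z.1 ≠ i
  have hzcons : (decide (z.1 = i) : Bool) = z.2 := by
    rw [hz2']
    have : z.1 ≠ i := fun h => hi h.symm
    simp [this]
  have hzw : τ z ≤ τ w := hw2 z hzcons
  -- w must be (i, true)
  have hwit : w = (i, true) := by
    rcases Bool.eq_false_or_eq_true w.2 with h2 | h2
    case inl h2 =>
      have : w.1 = i := by
        by_contra h
        rw [h2] at hw1
        simp [h] at hw1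
      have hww : w = (w.1, w.2) := by simp
      rw [hww, h2, ‹w.1 = i›]
    case inr h2 =>
      exfalso
      have hwcons0 : (false : Bool) = w.2 := h2.symm
      have hwz : τ w ≤ τ z := hz2 w hwcons0
      have : w = z := τ.injective (le_antisymm hwz hzw)
      exact hsep i (hw ▸ hz ▸ this)
  -- now show τ (j, false) < τ (i, true)
  rcases eq_or_ne j i with rfl | hji
  · -- τ (j,false) ≤ τ z < τ w = τ (j, true)
    have h1 : τ (j, false) ≤ τ z := hz2 (j, false) rfl
    have h2 : τ z < τ w := lt_of_le_of_ne hzw (by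
      intro h
      have : z = w := τ.injective h
      rw [hwit] at this
      rw [this] at hz2'
      simp at hz2')
    rw [hwit] at h2
    omega
  · have hcons : (decide ((j, false).1 = i) : Bool) = (j, false).2 := by simp [hji]
    have h1 : τ (j, false) ≤ τ w := hw2 (j, false) hcons
    have h2 : τ (j, false) ≠ τ w := by
      intro h
      have := τ.injective h
      rw [hwit] at this
      simp at this
    rw [hwit] at h1 h2
    omega
end
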